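/- In the extended Black–Scholes model with an earnings announcement and zero interest rate (r = 0), for an at-the-money option (S = K) the time decay of the pre-announcement call price is strictly less severe than the ordinary Black–Scholes Theta: if σ_e > 0 and 0 ≤ t < T, then ∂C/∂t (t, S) > Θ_BS(T−t, S; σ, S, 0), where C(t,S) = C_BS(T−t, S; I(t), S, 0) with I(t) = √(σ² + σ_e²/(T−t)) and Θ_BS(τ, S; σ, K, 0) = −S·σ·φ(d₁)/(2√τ). -/

import Mathlib

open MeasureTheory ProbabilityTheory

/-- The standard normal cumulative distribution function `Φ`. -/
noncomputable def stdNormalCDF (x : ℝ) : ℝ := ((gaussianReal 0 1) (Set.Iic x)).toReal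

/-- The standard normal density `φ`. -/
noncomputable def stdNormalPDF (x : ℝ) : ℝ := Real.exp (-x ^ 2 / 2) / Real.sqrt (2 * Real.pi)

/-- The Black–Scholes quantity `d₁`. -/
noncomputable def d1 (τ S σ K r : ℝ) : ℝ :=
  (Real.log (S / K) + (r + σ ^ 2 / 2) * τ) / (σ * Real.sqrt τ)

/-- The Black–Scholes quantity `d₂ = d₁ − σ√τ`. -/
noncomputable def d2 (τ S σ K r : ℝ) : ℝ := d1 τ S σ K r - σ * Real.sqrt τ

/-- The Black–Scholes call price `C_BS(τ, S; σ, K, r) = S·Φ(d₁) − K·e^{−rτ}·Φ(d₂)`. -/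
noncomputable def BSCall (τ S σ K r : ℝ) : ℝ :=
  S * stdNormalCDF (d1 τ S σ K r) - K * Real.exp (-r * τ) * stdNormalCDF (d2 τ S σ K r)

/-- The Black–Scholes Vega `V_BS(τ, S; σ, K, r) = S·φ(d₁)·√τ`. -/
noncomputable def BSVega (τ S σ K r : ℝ) : ℝ :=
  S * stdNormalPDF (d1 τ S σ K r) * Real.sqrt τ

/-- The Black–Scholes Theta
`Θ_BS(τ, S; σ, K, r) = −S·σ·φ(d₁)/(2√τ) − r·K·e^{−rτ}·Φ(d₂)`. -/
noncomputable def BSTheta (τ S σ K r : ℝ) : ℝ :=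
  -S * σ * stdNormalPDF (d1 τ S σ K r) / (2 * Real.sqrt τ)
    - r * K * Real.exp (-r * τ) * stdNormalCDF (d2 τ S σ K r)


lemma pdf_eq' : gaussianPDFReal 0 1 = stdNormalPDF := by
  ext x
  simp [gaussianPDFReal, stdNormalPDF, div_eq_inv_mul]

lemma stdNormalPDF_pos (x : ℝ) : 0 < stdNormalPDF x :=
  div_pos (Real.exp_pos _) (Real.sqrt_pos.2 (by positivity))

lemma stdNormalPDF_neg (x : ℝ) : stdNormalPDF (-x) = stdNormalPDF x := by
  simp [stdNormalPDF]

lemma continuous_stdNormalPDF : Continuous stdNormalPDF := by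
  unfold stdNormalPDF; fun_prop

lemma integrable_stdNormalPDF : Integrable stdNormalPDF := by
  rw [← pdf_eq']; exact integrable_gaussianPDFReal 0 1

lemma stdNormalCDF_eq (x : ℝ) : stdNormalCDF x = ∫ y in Set.Iic x, stdNormalPDF y := by
  rw [stdNormalCDF, gaussianReal_apply_eq_integral 0 one_ne_zero, ENNReal.toReal_ofReal, pdf_eq']
  rw [pdf_eq']
  exact integral_nonneg fun y => (stdNormalPDF_pos y).le

lemma hasDerivAt_stdNormalCDF (x : ℝ) : HasDerivAt stdNormalCDF (stdNormalPDF x) x := by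
  have key : ∀ y : ℝ, stdNormalCDF y = stdNormalCDF 0 + ∫ s in (0:ℝ)..y, stdNormalPDF s := by
    intro y
    rw [stdNormalCDF_eq, stdNormalCDF_eq,
      ← intervalIntegral.integral_Iic_sub_Iic integrable_stdNormalPDF.integrableOn
        integrable_stdNormalPDF.integrableOn]
    ring
  have h : HasDerivAt (fun y => stdNormalCDF 0 + ∫ s in (0:ℝ)..y, stdNormalPDF s)
      (stdNormalPDF x) x :=
    HasDerivAt.const_add _ <|
      intervalIntegral.integral_hasDerivAt_right
        integrable_stdNormalPDF.intervalIntegrable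
        continuous_stdNormalPDF.stronglyMeasurable.stronglyMeasurableAtFilter
        continuous_stdNormalPDF.continuousAt
  exact h.congr_of_eventuallyEq (Filter.Eventually.of_forall fun y => (key y))

lemma d1_ATM (τ S v : ℝ) (hτ : 0 < τ) (hS : 0 < S) (hv : 0 < v) :
    d1 τ S v S 0 = v * Real.sqrt τ / 2 := by
  have hst : 0 < Real.sqrt τ := Real.sqrt_pos.2 hτ
  unfold d1
  rw [div_self hS.ne', Real.log_one]
  have hττ : Real.sqrt τ * Real.sqrt τ = τ := Real.mul_self_sqrt hτ.le
  field_simp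
  nlinarith [hττ]

lemma BSCall_ATM (τ S v : ℝ) (hτ : 0 < τ) (hS : 0 < S) (hv : 0 < v) :
    BSCall τ S v S 0
      = S * stdNormalCDF (v * Real.sqrt τ / 2) - S * stdNormalCDF (-(v * Real.sqrt τ / 2)) := by
  unfold BSCall d2
  rw [d1_ATM τ S v hτ hS hv]
  have h : v * Real.sqrt τ / 2 - v * Real.sqrt τ = -(v * Real.sqrt τ / 2) := by ring
  rw [h]
  norm_num

lemma BSTheta_ATM (τ S v : ℝ) (hτ : 0 < τ) (hS : 0 < S) (hv : 0 < v) :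
    BSTheta τ S v S 0 = -S * v * stdNormalPDF (v * Real.sqrt τ / 2) / (2 * Real.sqrt τ) := by
  unfold BSTheta
  rw [d1_ATM τ S v hτ hS hv]
  norm_num

/-- In the extended Black–Scholes model with an EA jump, zero interest rate
`r = 0` and at-the-money strike `K = S`, if `σ_e > 0` and `0 ≤ t < T` then the time decay of
the pre-announcement call price `C(t,S) = C_BS(T−t, S; I(t), S, 0)`, with
`I(t) = √(σ² + σ_e²/(T−t))`, is strictly less severe than the ordinary Black–Scholes Theta:
`∂C/∂t (t, S) > Θ_BS(T−t, S; σ, S, 0)`. -/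
theorem extendedBS_theta_ATM_strict
    (σ σe t T S : ℝ) (hσ : 0 < σ) (hσe : 0 < σe) (hS : 0 < S)
    (ht : 0 ≤ t) (htT : t < T) :
    BSTheta (T - t) S σ S 0
      < deriv (fun s : ℝ => BSCall (T - s) S (Real.sqrt (σ ^ 2 + σe ^ 2 / (T - s))) S 0) t := by
  have hτ : 0 < T - t := sub_pos.2 htT
  have hst : 0 < Real.sqrt (T - t) := Real.sqrt_pos.2 hτ
  set u : ℝ := Real.sqrt (σ ^ 2 * (T - t) + σe ^ 2) with hu_def
  have hu : 0 < u := Real.sqrt_pos.2 (by positivity)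
  -- a = σ √τ < u
  have ha_eq : σ * Real.sqrt (T - t) = Real.sqrt (σ ^ 2 * (T - t)) := by
    rw [Real.sqrt_mul (by positivity), Real.sqrt_sq hσ.le]
  have hau : σ * Real.sqrt (T - t) < u := by
    rw [ha_eq, hu_def]
    exact Real.sqrt_lt_sqrt (by positivity) (by nlinarith)
  have ha_pos : 0 < σ * Real.sqrt (T - t) := by positivity
  -- the simplified function g
  set g : ℝ → ℝ := fun s =>
    S * stdNormalCDF (Real.sqrt (σ ^ 2 * (T - s) + σe ^ 2) / 2)
      - S * stdNormalCDF (-(Real.sqrt (σ ^ 2 * (T - s) + σe ^ 2) / 2)) with hg_def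
  have hev : (fun s : ℝ => BSCall (T - s) S (Real.sqrt (σ ^ 2 + σe ^ 2 / (T - s))) S 0)
      =ᶠ[nhds t] g := by
    filter_upwards [Iio_mem_nhds htT] with s hs
    have hτs : 0 < T - s := sub_pos.2 hs
    have hv : 0 < Real.sqrt (σ ^ 2 + σe ^ 2 / (T - s)) := Real.sqrt_pos.2 (by positivity)
    rw [BSCall_ATM _ _ _ hτs hS hv, hg_def]
    have hw : Real.sqrt (σ ^ 2 + σe ^ 2 / (T - s)) * Real.sqrt (T - s)
        = Real.sqrt (σ ^ 2 * (T - s) + σe ^ 2) := by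
      rw [← Real.sqrt_mul (by positivity)]
      congr 1
      field_simp
    rw [hw]
  -- derivative of g
  have hin : HasDerivAt (fun s : ℝ => σ ^ 2 * (T - s) + σe ^ 2) (-σ ^ 2) t := by
    have := (((hasDerivAt_id t).const_sub T).const_mul (σ ^ 2)).add_const (σe ^ 2)
    simpa using this
  have hsq : HasDerivAt (fun s : ℝ => Real.sqrt (σ ^ 2 * (T - s) + σe ^ 2))
      (-σ ^ 2 / (2 * u)) t := by
    have h := (Real.hasDerivAt_sqrt (show σ ^ 2 * (T - t) + σe ^ 2 ≠ 0 by positivity)).comp t hin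
    refine h.congr_deriv (Eq.symm ?_)
    rw [← hu_def]
    field_simp
  have hh : HasDerivAt (fun s : ℝ => Real.sqrt (σ ^ 2 * (T - s) + σe ^ 2) / 2)
      (-σ ^ 2 / (2 * u) / 2) t := hsq.div_const 2
  have hΦ1 : HasDerivAt (fun s : ℝ => stdNormalCDF (Real.sqrt (σ ^ 2 * (T - s) + σe ^ 2) / 2))
      (stdNormalPDF (u / 2) * (-σ ^ 2 / (2 * u) / 2)) t :=
    by have := (hasDerivAt_stdNormalCDF (u / 2)).comp t hh; exact this
  have hΦ2 : HasDerivAt (fun s : ℝ => stdNormalCDF (-(Real.sqrt (σ ^ 2 * (T - s) + σe ^ 2) / 2)))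
      (stdNormalPDF (-(u / 2)) * -(-σ ^ 2 / (2 * u) / 2)) t :=
    by have := (hasDerivAt_stdNormalCDF (-(u / 2))).comp t hh.neg; exact this
  have hg : HasDerivAt g (-(S * σ ^ 2 * stdNormalPDF (u / 2)) / (2 * u)) t := by
    have h := (hΦ1.const_mul S).sub (hΦ2.const_mul S)
    refine h.congr_deriv (Eq.symm ?_)
    rw [stdNormalPDF_neg]
    field_simp
    ring
  have hderiv : deriv (fun s : ℝ => BSCall (T - s) S
      (Real.sqrt (σ ^ 2 + σe ^ 2 / (T - s))) S 0) t
      = -(S * σ ^ 2 * stdNormalPDF (u / 2)) / (2 * u) := by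
    rw [hev.deriv_eq, hg.deriv]
  rw [hderiv, BSTheta_ATM _ _ _ hτ hS hσ]
  rw [div_lt_div_iff₀ (by positivity) (by positivity)]
  have hpu : 0 < stdNormalPDF (u / 2) := stdNormalPDF_pos _
  have hpa : 0 < stdNormalPDF (σ * Real.sqrt (T - t) / 2) := stdNormalPDF_pos _
  have hlt : stdNormalPDF (u / 2) < stdNormalPDF (σ * Real.sqrt (T - t) / 2) := by
    unfold stdNormalPDF
    have hc : 0 < Real.sqrt (2 * Real.pi) := Real.sqrt_pos.2 (by positivity)
    have he : Real.exp (-(u / 2) ^ 2 / 2) < Real.exp (-(σ * Real.sqrt (T - t) / 2) ^ 2 / 2) :=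
      Real.exp_lt_exp.2 (by nlinarith)
    rw [div_lt_div_iff₀ hc hc]
    nlinarith [Real.exp_pos (-(u / 2) ^ 2 / 2)]
  nlinarith [mul_pos hS (mul_pos hσ (mul_pos (sub_pos.2 hau) hpu)),
    mul_pos hS (mul_pos hσ (mul_pos (sub_pos.2 hlt) hu))]
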